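/- Fix θ, σ, t₀, t₁ ∈ ℂ and define, for ρ ∈ ℂ∖{0}: r₁(ρ) = −4i + iθ/ρ + 2iσ/ρ² − i(t₀+t₁)/(2ρ²) − iθ²/(8ρ²), r₂(ρ) = 4 − iθ/ρ + 2σ/ρ² − (t₀+t₁)/(2ρ²) − θ²/(8ρ²), r₁⁺(ρ) = 4i − iθ/ρ − 2iσ/ρ² − i(t₀−t₁)/(2ρ²) + iθ²/(8ρ²), r₂⁺(ρ) = 4i + θ/ρ + 2iσ/ρ² + i(t₀−t₁)/(2ρ²) − iθ²/(8ρ²). Then, as |ρ| → ∞, (r₁⁺(ρ)r₂(ρ) − r₂⁺(ρ)r₁(ρ)) / ( r₁'(ρ)r₂(ρ) − r₂'(ρ)r₁(ρ) + (1+i)·r₁(ρ)r₂(ρ) ) − ( −1 − i(t₀+θ)/(4ρ²) ) = O(ρ⁻³). -/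

import Mathlib

open Complex Filter Asymptotics

/-- `r₁(ρ) = −4i + iθ/ρ + 2iσ/ρ² − i(t₀+t₁)/(2ρ²) − iθ²/(8ρ²)`. -/
noncomputable def weightR1 (θ σ t₀ t₁ : ℂ) (ρ : ℂ) : ℂ :=
  -4 * Complex.I + Complex.I * θ / ρ + 2 * Complex.I * σ / ρ ^ 2
    - Complex.I * (t₀ + t₁) / (2 * ρ ^ 2) - Complex.I * θ ^ 2 / (8 * ρ ^ 2)

/-- `r₂(ρ) = 4 − iθ/ρ + 2σ/ρ² − (t₀+t₁)/(2ρ²) − θ²/(8ρ²)`. -/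
noncomputable def weightR2 (θ σ t₀ t₁ : ℂ) (ρ : ℂ) : ℂ :=
  4 - Complex.I * θ / ρ + 2 * σ / ρ ^ 2 - (t₀ + t₁) / (2 * ρ ^ 2) - θ ^ 2 / (8 * ρ ^ 2)

/-- `r₁⁺(ρ) = 4i − iθ/ρ − 2iσ/ρ² − i(t₀−t₁)/(2ρ²) + iθ²/(8ρ²)`. -/
noncomputable def weightR1p (θ σ t₀ t₁ : ℂ) (ρ : ℂ) : ℂ :=
  4 * Complex.I - Complex.I * θ / ρ - 2 * Complex.I * σ / ρ ^ 2
    - Complex.I * (t₀ - t₁) / (2 * ρ ^ 2) + Complex.I * θ ^ 2 / (8 * ρ ^ 2)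

/-- `r₂⁺(ρ) = 4i + θ/ρ + 2iσ/ρ² + i(t₀−t₁)/(2ρ²) − iθ²/(8ρ²)`. -/
noncomputable def weightR2p (θ σ t₀ t₁ : ℂ) (ρ : ℂ) : ℂ :=
  4 * Complex.I + θ / ρ + 2 * Complex.I * σ / ρ ^ 2
    + Complex.I * (t₀ - t₁) / (2 * ρ ^ 2) - Complex.I * θ ^ 2 / (8 * ρ ^ 2)

/-- Explicit formula for the derivative of `weightR1`. -/
noncomputable def wD1 (θ σ t₀ t₁ : ℂ) (ρ : ℂ) : ℂ :=
  -(Complex.I*θ) * (ρ^2)⁻¹ + (Complex.I*(t₀+t₁) + Complex.I*θ^2/4 - 4*Complex.I*σ) * (ρ^3)⁻¹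

/-- Explicit formula for the derivative of `weightR2`. -/
noncomputable def wD2 (θ σ t₀ t₁ : ℂ) (ρ : ℂ) : ℂ :=
  (Complex.I*θ) * (ρ^2)⁻¹ + ((t₀+t₁) + θ^2/4 - 4*σ) * (ρ^3)⁻¹

lemma hasDerivAt_invQuad (a b c : ℂ) {ρ : ℂ} (hρ : ρ ≠ 0) :
    HasDerivAt (fun x : ℂ => a + b * x⁻¹ + c * (x^2)⁻¹)
      (-b * (ρ^2)⁻¹ - 2*c*(ρ^3)⁻¹) ρ := by
  have h1 : HasDerivAt (fun x : ℂ => x⁻¹) (-(ρ^2)⁻¹) ρ := hasDerivAt_inv hρ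
  have hp : HasDerivAt (fun x : ℂ => x^2) ((2:ℕ) * ρ^1) ρ := hasDerivAt_pow 2 ρ
  have h2 := hp.inv (pow_ne_zero 2 hρ)
  have h := ((hasDerivAt_const ρ a).add (h1.const_mul b)).add (h2.const_mul c)
  have hd : -b * (ρ^2)⁻¹ - 2*c*(ρ^3)⁻¹ = 0 + b * -(ρ ^ 2)⁻¹ + c * (-(((2:ℕ):ℂ) * ρ ^ 1) / (ρ ^ 2) ^ 2) := by
    field_simp
    ring
  rw [hd]
  exact h

lemma deriv_weightR1 (θ σ t₀ t₁ : ℂ) {ρ : ℂ} (hρ : ρ ≠ 0) :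
    deriv (weightR1 θ σ t₀ t₁) ρ = wD1 θ σ t₀ t₁ ρ := by
  have hfun : weightR1 θ σ t₀ t₁ = fun x : ℂ =>
      -4*Complex.I + (Complex.I*θ) * x⁻¹
        + (2*Complex.I*σ - Complex.I*(t₀+t₁)/2 - Complex.I*θ^2/8) * (x^2)⁻¹ := by
    funext x
    simp only [weightR1, div_eq_mul_inv, mul_inv]
    ring
  rw [hfun, (hasDerivAt_invQuad _ _ _ hρ).deriv, wD1]
  field_simp
  ring

lemma deriv_weightR2 (θ σ t₀ t₁ : ℂ) {ρ : ℂ} (hρ : ρ ≠ 0) :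
    deriv (weightR2 θ σ t₀ t₁) ρ = wD2 θ σ t₀ t₁ ρ := by
  have hfun : weightR2 θ σ t₀ t₁ = fun x : ℂ =>
      4 + (-(Complex.I*θ)) * x⁻¹
        + (2*σ - (t₀+t₁)/2 - θ^2/8) * (x^2)⁻¹ := by
    funext x
    simp only [weightR2, div_eq_mul_inv, mul_inv]
    ring
  rw [hfun, (hasDerivAt_invQuad _ _ _ hρ).deriv, wD2]
  field_simp
  ring

set_option maxHeartbeats 2000000 in
/-- As `|ρ| → ∞`,
`(r₁⁺r₂ − r₂⁺r₁)/(r₁'r₂ − r₂'r₁ + (1+i)r₁r₂) − (−1 − i(t₀+θ)/(4ρ²)) = O(ρ⁻³)`,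
where primes denote `d/dρ`. -/
theorem weight_ratio_asymptotics (θ σ t₀ t₁ : ℂ) :
    (fun ρ : ℂ =>
        (weightR1p θ σ t₀ t₁ ρ * weightR2 θ σ t₀ t₁ ρ
            - weightR2p θ σ t₀ t₁ ρ * weightR1 θ σ t₀ t₁ ρ) /
          (deriv (weightR1 θ σ t₀ t₁) ρ * weightR2 θ σ t₀ t₁ ρ
            - deriv (weightR2 θ σ t₀ t₁) ρ * weightR1 θ σ t₀ t₁ ρ
            + (1 + Complex.I) * (weightR1 θ σ t₀ t₁ ρ * weightR2 θ σ t₀ t₁ ρ)) -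
        (-1 - Complex.I * (t₀ + θ) / (4 * ρ ^ 2))) =O[Filter.comap (fun z : ℂ => ‖z‖) Filter.atTop]
      fun ρ : ℂ => (ρ ^ 3)⁻¹ := by
  set l := Filter.comap (fun z : ℂ => ‖z‖) Filter.atTop with hl
  have habs : Tendsto (fun z : ℂ => ‖z‖) l atTop := tendsto_comap
  have hinv : Tendsto (fun ρ : ℂ => ρ⁻¹) l (nhds 0) := by
    rw [tendsto_zero_iff_norm_tendsto_zero]
    simp only [norm_inv]
    exact habs.inv_tendsto_atTop
  have hne : ∀ᶠ ρ : ℂ in l, ρ ≠ 0 := by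
    filter_upwards [habs.eventually (eventually_ge_atTop 1)] with ρ hρ
    intro h
    simp [h] at hρ
    linarith
  have key : ∀ (a b c d : ℂ), Tendsto (fun ρ : ℂ => a + b*ρ⁻¹ + c*ρ⁻¹^2 + d*ρ⁻¹^3)
      l (nhds a) := by
    intro a b c d
    have := (((tendsto_const_nhds (x := a)).add (hinv.const_mul b)).add
      ((hinv.pow 2).const_mul c)).add ((hinv.pow 3).const_mul d)
    simpa using this
  -- limits of the building blocks
  have h1 : Tendsto (fun ρ : ℂ => weightR1 θ σ t₀ t₁ ρ) l (nhds (-4*Complex.I)) := by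
    refine (key (-4*Complex.I) (Complex.I*θ)
      (2*Complex.I*σ - Complex.I*(t₀+t₁)/2 - Complex.I*θ^2/8) 0).congr (fun ρ => ?_)
    simp only [weightR1, div_eq_mul_inv, mul_inv, inv_pow]
    ring
  have h2 : Tendsto (fun ρ : ℂ => weightR2 θ σ t₀ t₁ ρ) l (nhds 4) := by
    refine (key 4 (-(Complex.I*θ)) (2*σ - (t₀+t₁)/2 - θ^2/8) 0).congr (fun ρ => ?_)
    simp only [weightR2, div_eq_mul_inv, mul_inv, inv_pow]
    ring
  have hd1 : Tendsto (fun ρ : ℂ => wD1 θ σ t₀ t₁ ρ) l (nhds 0) := by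
    refine (key 0 0 (-(Complex.I*θ))
      (Complex.I*(t₀+t₁) + Complex.I*θ^2/4 - 4*Complex.I*σ)).congr (fun ρ => ?_)
    simp only [wD1, div_eq_mul_inv, mul_inv, inv_pow]
    ring
  have hd2 : Tendsto (fun ρ : ℂ => wD2 θ σ t₀ t₁ ρ) l (nhds 0) := by
    refine (key 0 0 (Complex.I*θ) ((t₀+t₁) + θ^2/4 - 4*σ)).congr (fun ρ => ?_)
    simp only [wD2, div_eq_mul_inv, mul_inv, inv_pow]
    ring
  -- the denominator and its limit
  set Dfun : ℂ → ℂ := fun ρ => wD1 θ σ t₀ t₁ ρ * weightR2 θ σ t₀ t₁ ρ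
      - wD2 θ σ t₀ t₁ ρ * weightR1 θ σ t₀ t₁ ρ
      + (1 + Complex.I) * (weightR1 θ σ t₀ t₁ ρ * weightR2 θ σ t₀ t₁ ρ) with hDfun
  clear_value Dfun
  have h16 : (16:ℂ) - 16*Complex.I ≠ 0 := by
    simp [Complex.ext_iff]
  have hD : Tendsto Dfun l (nhds (16 - 16*Complex.I)) := by
    have hc : Tendsto (fun _ : ℂ => (1 + Complex.I)) l (nhds (1 + Complex.I)) :=
      tendsto_const_nhds
    have := ((hd1.mul h2).sub (hd2.mul h1)).add (hc.mul (h1.mul h2))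
    have hval : (0:ℂ)*4 - 0*(-4*Complex.I) + (1+Complex.I)*(-4*Complex.I*4)
        = 16 - 16*Complex.I := by
      have := Complex.I_sq
      ring_nf
      rw [Complex.I_sq]
      ring
    rw [hval] at this
    rw [hDfun]
    exact this
  have hDne : ∀ᶠ ρ in l, Dfun ρ ≠ 0 := hD.eventually_ne h16
  -- the remainder polynomial H
  set Hfun : ℂ → ℂ := fun ρ => ((-1/2:ℂ) * t₀ * t₁ * ρ⁻¹ + (-2:ℂ) * t₀ * t₁ * ρ⁻¹^2 + (-1/16:ℂ) * t₀ * t₁^2 * ρ⁻¹^3 + (-1/2:ℂ) * t₀^2 * ρ⁻¹ + (-2:ℂ) * t₀^2 * ρ⁻¹^2 + (-1/8:ℂ) * t₀^2 * t₁ * ρ⁻¹^3 + (-1/16:ℂ) * t₀^3 * ρ⁻¹^3 + (2:ℂ) * σ * t₀ * ρ⁻¹ + (8:ℂ) * σ * t₀ * ρ⁻¹^2 + (1/2:ℂ) * σ * t₀ * t₁ * ρ⁻¹^3 + (1/2:ℂ) * σ * t₀^2 * ρ⁻¹^3 + (-1:ℂ) * σ^2 * t₀ * ρ⁻¹^3 +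 (1/2:ℂ) * θ * t₁ * ρ⁻¹ + (-2:ℂ) * θ * t₁ * ρ⁻¹^2 + (-1/16:ℂ) * θ * t₁^2 * ρ⁻¹^3 + (3/2:ℂ) * θ * t₀ * ρ⁻¹ + (-2:ℂ) * θ * t₀ * ρ⁻¹^2 + (1/4:ℂ) * θ * t₀ * t₁ * ρ⁻¹^2 + (1/4:ℂ) * θ * t₀^2 * ρ⁻¹^2 + (1/16:ℂ) * θ * t₀^2 * ρ⁻¹^3 + (-2:ℂ) * θ * σ * ρ⁻¹ + (8:ℂ) * θ * σ * ρ⁻¹^2 + (1/2:ℂ) * θ * σ * t₁ * ρ⁻¹^3 + (-1:ℂ) * θ * σ * t₀ * ρ⁻¹^2 + (-1:ℂ) * θ * σ^2 * ρ⁻¹^3 + (1:ℂ) * θ^2 * ρ⁻¹ + (1/4:ℂ) * θ^2 * t₁ * ρ⁻¹^2 + (1/8:ℂ) * θ^2 * t₁ * ρ⁻¹^3 + (-3/8:ℂ) * θ^2 * t₀ * ρ⁻¹ + (-1/4:ℂ) * θ^2 * t₀ * ρ⁻¹^2 + (1/8:ℂ) * θ^2 * t₀ * ρ⁻¹^3 +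 (-1/32:ℂ) * θ^2 * t₀ * t₁ * ρ⁻¹^3 + (-1/32:ℂ) * θ^2 * t₀^2 * ρ⁻¹^3 + (-1:ℂ) * θ^2 * σ * ρ⁻¹^2 + (-1/2:ℂ) * θ^2 * σ * ρ⁻¹^3 + (1/8:ℂ) * θ^2 * σ * t₀ * ρ⁻¹^3 + (-1/8:ℂ) * θ^3 * ρ⁻¹ + (-1/2:ℂ) * θ^3 * ρ⁻¹^2 + (-1/32:ℂ) * θ^3 * t₁ * ρ⁻¹^3 + (1/16:ℂ) * θ^3 * t₀ * ρ⁻¹^2 + (1/8:ℂ) * θ^3 * σ * ρ⁻¹^3 + (1/16:ℂ) * θ^4 * ρ⁻¹^2 + (1/32:ℂ) * θ^4 * ρ⁻¹^3 + (-1/256:ℂ) * θ^4 * t₀ * ρ⁻¹^3 + (-1/256:ℂ) * θ^5 * ρ⁻¹^3 + (8:ℂ) * Complex.I * t₁ + (8:ℂ) * Complex.I * t₀ + (1/2:ℂ) * Complex.I * t₀ * t₁ * ρ⁻¹ + (-1/16:ℂ) * Complex.I * t₀ * t₁^2 * ρ⁻¹^3 + (1/2:ℂ) * Complex.I * t₀^2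 * ρ⁻¹ + (-1/8:ℂ) * Complex.I * t₀^2 * t₁ * ρ⁻¹^3 + (-1/16:ℂ) * Complex.I * t₀^3 * ρ⁻¹^3 + (-32:ℂ) * Complex.I * σ + (-2:ℂ) * Complex.I * σ * t₀ * ρ⁻¹ + (1/2:ℂ) * Complex.I * σ * t₀ * t₁ * ρ⁻¹^3 + (1/2:ℂ) * Complex.I * σ * t₀^2 * ρ⁻¹^3 + (-1:ℂ) * Complex.I * σ^2 * t₀ * ρ⁻¹^3 + (-1/2:ℂ) * Complex.I * θ * t₁ * ρ⁻¹ + (-1/16:ℂ) * Complex.I * θ * t₁^2 * ρ⁻¹^3 + (-2:ℂ) * Complex.I * θ * t₀ + (-3/2:ℂ) * Complex.I * θ * t₀ * ρ⁻¹ + (1/16:ℂ) * Complex.I * θ * t₀^2 * ρ⁻¹^3 + (2:ℂ) * Complex.I * θ * σ * ρ⁻¹ + (1/2:ℂ) * Complex.I * θ * σ * t₁ * ρ⁻¹^3 + (-1:ℂ) * Complex.I * θ * σ^2 * ρ⁻¹^3 + (-1:ℂ) * Complex.I * θ^2 * ρ⁻¹ + (1/8:ℂ) * Complex.I * θ^2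 * t₁ * ρ⁻¹^3 + (3/8:ℂ) * Complex.I * θ^2 * t₀ * ρ⁻¹ + (1/8:ℂ) * Complex.I * θ^2 * t₀ * ρ⁻¹^3 + (-1/32:ℂ) * Complex.I * θ^2 * t₀ * t₁ * ρ⁻¹^3 + (-1/32:ℂ) * Complex.I * θ^2 * t₀^2 * ρ⁻¹^3 + (-1/2:ℂ) * Complex.I * θ^2 * σ * ρ⁻¹^3 + (1/8:ℂ) * Complex.I * θ^2 * σ * t₀ * ρ⁻¹^3 + (1/8:ℂ) * Complex.I * θ^3 * ρ⁻¹ + (-1/32:ℂ) * Complex.I * θ^3 * t₁ * ρ⁻¹^3 + (1/8:ℂ) * Complex.I * θ^3 * σ * ρ⁻¹^3 + (1/32:ℂ) * Complex.I * θ^4 * ρ⁻¹^3 + (-1/256:ℂ) * Complex.I * θ^4 * t₀ * ρ⁻¹^3 + (-1/256:ℂ) * Complex.I * θ^5 * ρ⁻¹^3) with hHfun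
  clear_value Hfun
  have hHlim : Tendsto Hfun l (nhds ((8:ℂ) * Complex.I * t₁ + (8:ℂ) * Complex.I * t₀ + (-32:ℂ) * Complex.I * σ + (-2:ℂ) * Complex.I * θ * t₀)) := by
    refine (key ((8:ℂ) * Complex.I * t₁ + (8:ℂ) * Complex.I * t₀ + (-32:ℂ) * Complex.I * σ + (-2:ℂ) * Complex.I * θ * t₀) ((-1/2:ℂ) * t₀ * t₁ + (-1/2:ℂ) * t₀^2 + (2:ℂ) * σ * t₀ + (1/2:ℂ) * θ * t₁ + (3/2:ℂ) * θ * t₀ + (-2:ℂ) * θ * σ + (1:ℂ) * θ^2 + (-3/8:ℂ) * θ^2 * t₀ + (-1/8:ℂ) * θ^3 + (1/2:ℂ) * Complex.I * t₀ * t₁ + (1/2:ℂ) * Complex.I * t₀^2 + (-2:ℂ) * Complex.I * σ * t₀ + (-1/2:ℂ) * Complex.I * θ * t₁ + (-3/2:ℂ) * Complex.I * θ * t₀ + (2:ℂ) * Complex.I * θ * σ + (-1:ℂ) * Complex.I * θ^2 + (3/8:ℂ) * Complex.I * θ^2 * t₀ + (1/8:ℂ) * Complex.I * θ^3) ((-2:ℂ)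 * t₀ * t₁ + (-2:ℂ) * t₀^2 + (8:ℂ) * σ * t₀ + (-2:ℂ) * θ * t₁ + (-2:ℂ) * θ * t₀ + (1/4:ℂ) * θ * t₀ * t₁ + (1/4:ℂ) * θ * t₀^2 + (8:ℂ) * θ * σ + (-1:ℂ) * θ * σ * t₀ + (1/4:ℂ) * θ^2 * t₁ + (-1/4:ℂ) * θ^2 * t₀ + (-1:ℂ) * θ^2 * σ + (-1/2:ℂ) * θ^3 + (1/16:ℂ) * θ^3 * t₀ + (1/16:ℂ) * θ^4) ((-1/16:ℂ) * t₀ * t₁^2 + (-1/8:ℂ) * t₀^2 * t₁ + (-1/16:ℂ) * t₀^3 + (1/2:ℂ) * σ * t₀ * t₁ + (1/2:ℂ) * σ * t₀^2 + (-1:ℂ) * σ^2 * t₀ + (-1/16:ℂ) * θ * t₁^2 + (1/16:ℂ) * θ * t₀^2 + (1/2:ℂ) * θ * σ * t₁ + (-1:ℂ) * θ * σ^2 + (1/8:ℂ) * θ^2 * t₁ + (1/8:ℂ) * θ^2 * t₀ + (-1/32:ℂ) * θ^2 * t₀ * t₁ + (-1/32:ℂ) * θ^2 * t₀^2 + (-1/2:ℂ)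 * θ^2 * σ + (1/8:ℂ) * θ^2 * σ * t₀ + (-1/32:ℂ) * θ^3 * t₁ + (1/8:ℂ) * θ^3 * σ + (1/32:ℂ) * θ^4 + (-1/256:ℂ) * θ^4 * t₀ + (-1/256:ℂ) * θ^5 + (-1/16:ℂ) * Complex.I * t₀ * t₁^2 + (-1/8:ℂ) * Complex.I * t₀^2 * t₁ + (-1/16:ℂ) * Complex.I * t₀^3 + (1/2:ℂ) * Complex.I * σ * t₀ * t₁ + (1/2:ℂ) * Complex.I * σ * t₀^2 + (-1:ℂ) * Complex.I * σ^2 * t₀ + (-1/16:ℂ) * Complex.I * θ * t₁^2 + (1/16:ℂ) * Complex.I * θ * t₀^2 + (1/2:ℂ) * Complex.I * θ * σ * t₁ + (-1:ℂ) * Complex.I * θ * σ^2 + (1/8:ℂ) * Complex.I * θ^2 * t₁ + (1/8:ℂ) * Complex.I * θ^2 * t₀ + (-1/32:ℂ) * Complex.I * θ^2 * t₀ * t₁ + (-1/32:ℂ) * Complex.I * θ^2 * t₀^2 + (-1/2:ℂ) * Complex.I * θ^2 * σ + (1/8:ℂ) * Complex.I * θ^2 * σ * t₀ + (-1/32:ℂ)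 * Complex.I * θ^3 * t₁ + (1/8:ℂ) * Complex.I * θ^3 * σ + (1/32:ℂ) * Complex.I * θ^4 + (-1/256:ℂ) * Complex.I * θ^4 * t₀ + (-1/256:ℂ) * Complex.I * θ^5)).congr (fun ρ => ?_)
    simp only [hHfun]
    ring
  -- key algebraic identity
  have hkey : ∀ ρ : ℂ,
      (weightR1p θ σ t₀ t₁ ρ * weightR2 θ σ t₀ t₁ ρ
          - weightR2p θ σ t₀ t₁ ρ * weightR1 θ σ t₀ t₁ ρ)
        - (-1 - Complex.I * (t₀ + θ) / (4 * ρ ^ 2)) * Dfun ρ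
        = (ρ ^ 3)⁻¹ * Hfun ρ := by
    intro ρ
    simp only [hDfun, hHfun, weightR1, weightR2, weightR1p, weightR2p, wD1, wD2]
    have hI := Complex.I_sq
    linear_combination (((1/2:ℂ) * t₀ * t₁ * ρ⁻¹^4 + (2:ℂ) * t₀ * t₁ * ρ⁻¹^5 + (1/16:ℂ) * t₀ * t₁^2 * ρ⁻¹^6 + (1/2:ℂ) * t₀^2 * ρ⁻¹^4 + (2:ℂ) * t₀^2 * ρ⁻¹^5 + (1/8:ℂ) * t₀^2 * t₁ * ρ⁻¹^6 + (1/16:ℂ) * t₀^3 * ρ⁻¹^6 + (-2:ℂ) * σ * t₀ * ρ⁻¹^4 + (-8:ℂ) * σ * t₀ * ρ⁻¹^5 + (-1/2:ℂ) * σ * t₀ * t₁ * ρ⁻¹^6 + (-1/2:ℂ) * σ * t₀^2 * ρ⁻¹^6 + (1:ℂ) * σ^2 * t₀ * ρ⁻¹^6 + (-1/2:ℂ) * θ * t₁ * ρ⁻¹^4 + (2:ℂ) * θ * t₁ * ρ⁻¹^5 + (1/16:ℂ) * θ * t₁^2 * ρ⁻¹^6 + (-3/2:ℂ) * θ * t₀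 * ρ⁻¹^4 + (2:ℂ) * θ * t₀ * ρ⁻¹^5 + (-1/4:ℂ) * θ * t₀ * t₁ * ρ⁻¹^5 + (-1/4:ℂ) * θ * t₀^2 * ρ⁻¹^5 + (-1/16:ℂ) * θ * t₀^2 * ρ⁻¹^6 + (2:ℂ) * θ * σ * ρ⁻¹^4 + (-8:ℂ) * θ * σ * ρ⁻¹^5 + (-1/2:ℂ) * θ * σ * t₁ * ρ⁻¹^6 + (1:ℂ) * θ * σ * t₀ * ρ⁻¹^5 + (1:ℂ) * θ * σ^2 * ρ⁻¹^6 + (-1:ℂ) * θ^2 * ρ⁻¹^4 + (-1/4:ℂ) * θ^2 * t₁ * ρ⁻¹^5 + (-1/8:ℂ) * θ^2 * t₁ * ρ⁻¹^6 + (3/8:ℂ) * θ^2 * t₀ * ρ⁻¹^4 + (1/4:ℂ) * θ^2 * t₀ * ρ⁻¹^5 + (-1/8:ℂ) * θ^2 * t₀ * ρ⁻¹^6 + (1/32:ℂ) * θ^2 * t₀ * t₁ * ρ⁻¹^6 + (1/32:ℂ) * θ^2 * t₀^2 * ρ⁻¹^6 + (1:ℂ) * θ^2 * σ * ρ⁻¹^5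 + (1/2:ℂ) * θ^2 * σ * ρ⁻¹^6 + (-1/8:ℂ) * θ^2 * σ * t₀ * ρ⁻¹^6 + (1/8:ℂ) * θ^3 * ρ⁻¹^4 + (1/2:ℂ) * θ^3 * ρ⁻¹^5 + (1/32:ℂ) * θ^3 * t₁ * ρ⁻¹^6 + (-1/16:ℂ) * θ^3 * t₀ * ρ⁻¹^5 + (-1/8:ℂ) * θ^3 * σ * ρ⁻¹^6 + (-1/16:ℂ) * θ^4 * ρ⁻¹^5 + (-1/32:ℂ) * θ^4 * ρ⁻¹^6 + (1/256:ℂ) * θ^4 * t₀ * ρ⁻¹^6 + (1/256:ℂ) * θ^5 * ρ⁻¹^6 + (-4:ℂ) * Complex.I * t₀ * ρ⁻¹^2 + (1/16:ℂ) * Complex.I * t₀ * t₁^2 * ρ⁻¹^6 + (1/8:ℂ) * Complex.I * t₀^2 * t₁ * ρ⁻¹^6 + (1/16:ℂ) * Complex.I * t₀^3 * ρ⁻¹^6 + (-1/2:ℂ) * Complex.I * σ * t₀ * t₁ * ρ⁻¹^6 + (-1/2:ℂ) * Complex.I * σ * t₀^2 * ρ⁻¹^6 + (1:ℂ) * Complex.I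 * σ^2 * t₀ * ρ⁻¹^6 + (4:ℂ) * Complex.I * θ * ρ⁻¹ + (-4:ℂ) * Complex.I * θ * ρ⁻¹^2 + (1/2:ℂ) * Complex.I * θ * t₁ * ρ⁻¹^3 + (1/16:ℂ) * Complex.I * θ * t₁^2 * ρ⁻¹^6 + (5/2:ℂ) * Complex.I * θ * t₀ * ρ⁻¹^3 + (1:ℂ) * Complex.I * θ * t₀ * ρ⁻¹^4 + (-1/16:ℂ) * Complex.I * θ * t₀^2 * ρ⁻¹^6 + (-2:ℂ) * Complex.I * θ * σ * ρ⁻¹^3 + (-1/2:ℂ) * Complex.I * θ * σ * t₁ * ρ⁻¹^6 + (1:ℂ) * Complex.I * θ * σ^2 * ρ⁻¹^6 + (-1:ℂ) * Complex.I * θ^2 * ρ⁻¹^2 + (2:ℂ) * Complex.I * θ^2 * ρ⁻¹^3 + (1:ℂ) * Complex.I * θ^2 * ρ⁻¹^4 + (-1/8:ℂ) * Complex.I * θ^2 * t₁ * ρ⁻¹^6 + (-1/4:ℂ) * Complex.I * θ^2 * t₀ * ρ⁻¹^4 + (-1/8:ℂ) * Complex.I * θ^2 * t₀ * ρ⁻¹^6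 + (1/32:ℂ) * Complex.I * θ^2 * t₀ * t₁ * ρ⁻¹^6 + (1/32:ℂ) * Complex.I * θ^2 * t₀^2 * ρ⁻¹^6 + (1/2:ℂ) * Complex.I * θ^2 * σ * ρ⁻¹^6 + (-1/8:ℂ) * Complex.I * θ^2 * σ * t₀ * ρ⁻¹^6 + (1/8:ℂ) * Complex.I * θ^3 * ρ⁻¹^3 + (-1/4:ℂ) * Complex.I * θ^3 * ρ⁻¹^4 + (1/32:ℂ) * Complex.I * θ^3 * t₁ * ρ⁻¹^6 + (-1/8:ℂ) * Complex.I * θ^3 * σ * ρ⁻¹^6 + (-1/32:ℂ) * Complex.I * θ^4 * ρ⁻¹^6 + (1/256:ℂ) * Complex.I * θ^4 * t₀ * ρ⁻¹^6 + (1/256:ℂ) * Complex.I * θ^5 * ρ⁻¹^6 + (1:ℂ) * Complex.I^2 * θ * t₀ * ρ⁻¹^3 + (1/8:ℂ) * Complex.I^2 * θ * t₀ * t₁ * ρ⁻¹^5 + (1/8:ℂ) * Complex.I^2 * θ * t₀^2 * ρ⁻¹^5 + (-1/2:ℂ) * Complex.I^2 * θ * σ * t₀ * ρ⁻¹^5 +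 (1:ℂ) * Complex.I^2 * θ^2 * ρ⁻¹^3 + (1/8:ℂ) * Complex.I^2 * θ^2 * t₁ * ρ⁻¹^5 + (-1/4:ℂ) * Complex.I^2 * θ^2 * t₀ * ρ⁻¹^4 + (1/8:ℂ) * Complex.I^2 * θ^2 * t₀ * ρ⁻¹^5 + (-1/2:ℂ) * Complex.I^2 * θ^2 * σ * ρ⁻¹^5 + (-1/4:ℂ) * Complex.I^2 * θ^3 * ρ⁻¹^4 + (1/32:ℂ) * Complex.I^2 * θ^3 * t₀ * ρ⁻¹^5 + (1/32:ℂ) * Complex.I^2 * θ^4 * ρ⁻¹^5)) * hI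
  -- put things together
  have hratio : Tendsto (fun ρ : ℂ => Hfun ρ / Dfun ρ) l
      (nhds (((8:ℂ) * Complex.I * t₁ + (8:ℂ) * Complex.I * t₀ + (-32:ℂ) * Complex.I * σ + (-2:ℂ) * Complex.I * θ * t₀) / (16 - 16*Complex.I))) :=
    hHlim.div hD h16
  have hO1 : (fun ρ : ℂ => Hfun ρ / Dfun ρ) =O[l] (fun _ : ℂ => (1:ℂ)) :=
    hratio.isBigO_one ℂ
  have hOfinal : (fun ρ : ℂ => (ρ^3)⁻¹ * (Hfun ρ / Dfun ρ)) =O[l]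
      (fun ρ : ℂ => (ρ^3)⁻¹) := by
    have := (isBigO_refl (fun ρ : ℂ => (ρ^3)⁻¹) l).mul hO1
    simpa using this
  refine hOfinal.congr' ?_ EventuallyEq.rfl
  filter_upwards [hne, hDne] with ρ hρ hD0
  rw [deriv_weightR1 θ σ t₀ t₁ hρ, deriv_weightR2 θ σ t₀ t₁ hρ]
  have hDpt : wD1 θ σ t₀ t₁ ρ * weightR2 θ σ t₀ t₁ ρ
      - wD2 θ σ t₀ t₁ ρ * weightR1 θ σ t₀ t₁ ρ
      + (1 + Complex.I) * (weightR1 θ σ t₀ t₁ ρ * weightR2 θ σ t₀ t₁ ρ) = Dfun ρ := by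
    rw [hDfun]
  rw [hDpt]
  have hch : weightR1p θ σ t₀ t₁ ρ * weightR2 θ σ t₀ t₁ ρ
      - weightR2p θ σ t₀ t₁ ρ * weightR1 θ σ t₀ t₁ ρ
      = (-1 - Complex.I * (t₀ + θ) / (4 * ρ ^ 2)) * Dfun ρ + (ρ ^ 3)⁻¹ * Hfun ρ := by
    linear_combination hkey ρ
  rw [eq_sub_iff_add_eq, eq_div_iff hD0, hch]
  have hcan : Hfun ρ / Dfun ρ * Dfun ρ = Hfun ρ := div_mul_cancel₀ _ hD0
  linear_combination (ρ^3)⁻¹ * hcan
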